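/- Suppose p̃(n) = p̃(n₀)·(n/n₀)^{Γ(n)} for n ∈ (0, n₀], where Γ: (0,n₀] → ℝ is nonincreasing and satisfies 1 < Γ_min ≤ Γ(n). Then for every n ∈ (0, n₀], n ∫₀ⁿ p̃(n')/n'² dn' ≤ p̃(n)/(Γ(n) − 1) ≤ p̃(n)/(Γ_min − 1). Consequently, with ϱ(n) = n + n ∫₀ⁿ p̃(n')/n'² dn', one has n ≥ ϱ(n) − p̃(n)/(Γ_min − 1). -/
import Mathlib


open MeasureTheory intervalIntegral

/-- for a barotropic EOS `p̃(n) = p̃(n₀)(n/n₀)^{Γ(n)}` with nonincreasing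
exponent `Γ` bounded below by `Γmin > 1`, the integral term in the energy density is
bounded: `n ∫₀ⁿ p̃/n'² ≤ p̃(n)/(Γ(n)−1) ≤ p̃(n)/(Γmin−1)`, hence
`n ≥ ϱ(n) − p̃(n)/(Γmin−1)` where `ϱ(n) = n + n ∫₀ⁿ p̃/n'²`. -/
theorem barotropic_nonincreasing_gamma_bound
    (p Γ : ℝ → ℝ) (n₀ Γmin : ℝ)
    (hn₀ : 0 < n₀) (hp₀ : 0 < p n₀)
    (hΓmono : AntitoneOn Γ (Set.Ioc 0 n₀))
    (hΓmin : 1 < Γmin)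
    (hΓge : ∀ n ∈ Set.Ioc (0:ℝ) n₀, Γmin ≤ Γ n)
    (heos : ∀ n ∈ Set.Ioc (0:ℝ) n₀, p n = p n₀ * (n / n₀) ^ Γ n) :
    ∀ n ∈ Set.Ioc (0:ℝ) n₀,
      (n * ∫ t in (0:ℝ)..n, p t / t ^ 2) ≤ p n / (Γ n - 1) ∧
      p n / (Γ n - 1) ≤ p n / (Γmin - 1) ∧
      n ≥ (n + n * ∫ t in (0:ℝ)..n, p t / t ^ 2) - p n / (Γmin - 1) := by
  intro n hn
  obtain ⟨hn0, hnn₀⟩ := hn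
  set γ := Γ n with hγdef
  have hγmin : Γmin ≤ γ := hΓge n ⟨hn0, hnn₀⟩
  have hγ1 : 1 < γ := lt_of_lt_of_le hΓmin hγmin
  have hγs1 : 0 < γ - 1 := by linarith
  -- the comparison function
  set C : ℝ := p n₀ / n₀ ^ γ with hCdef
  have hC : 0 < C := div_pos hp₀ (Real.rpow_pos_of_pos hn₀ γ)
  set g : ℝ → ℝ := fun t => C * t ^ (γ - 2) with hgdef
  -- pointwise bounds on Ioc 0 n
  have hbound : ∀ t ∈ Set.Ioc (0:ℝ) n, 0 ≤ p t / t ^ 2 ∧ p t / t ^ 2 ≤ g t := by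
    intro t ht
    obtain ⟨ht0, htn⟩ := ht
    have htn₀ : t ≤ n₀ := le_trans htn hnn₀
    have htmem : t ∈ Set.Ioc (0:ℝ) n₀ := ⟨ht0, htn₀⟩
    have hpt : p t = p n₀ * (t / n₀) ^ Γ t := heos t htmem
    have hratio0 : 0 < t / n₀ := div_pos ht0 hn₀
    have hratio1 : t / n₀ ≤ 1 := (div_le_one hn₀).2 htn₀
    have hpt0 : 0 ≤ p t := by
      rw [hpt]; positivity
    constructor
    · positivity
    · have hΓt : γ ≤ Γ t := hΓmono htmem ⟨hn0, hnn₀⟩ htn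
      have h1 : (t / n₀) ^ Γ t ≤ (t / n₀) ^ γ :=
        Real.rpow_le_rpow_of_exponent_ge hratio0 hratio1 hΓt
      have h2 : p t ≤ p n₀ * (t / n₀) ^ γ := by
        rw [hpt]; exact mul_le_mul_of_nonneg_left h1 hp₀.le
      have h3 : p n₀ * (t / n₀) ^ γ = C * t ^ γ := by
        rw [Real.div_rpow ht0.le hn₀.le, hCdef]
        ring
      have h4 : p t / t ^ 2 ≤ C * t ^ γ / t ^ 2 := by
        apply div_le_div_of_nonneg_right ?_ (by positivity)
        · rw [← h3]; exact h2
      refine h4.trans_eq ?_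
      have ht2 : (t:ℝ) ^ (2:ℕ) = t ^ (2:ℝ) := by
        rw [← Real.rpow_natCast t 2]; norm_num
      rw [hgdef]
      simp only
      rw [ht2, mul_div_assoc, ← Real.rpow_sub ht0]
  -- integrability of g
  have hgint : IntervalIntegrable g volume 0 n := by
    have := (intervalIntegrable_rpow' (a := 0) (b := n) (r := γ - 2) (by linarith)).const_mul C
    exact this
  -- integrability of p t / t^2
  have hΓae : AEMeasurable Γ (volume.restrict (Set.Ioc (0:ℝ) n)) := by
    have h1 : AEMeasurable Γ (volume.restrict (Set.Ioc (0:ℝ) n₀)) :=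
      aemeasurable_restrict_of_antitoneOn measurableSet_Ioc hΓmono
    exact h1.mono_measure (Measure.restrict_mono (Set.Ioc_subset_Ioc_right hnn₀) le_rfl)
  have hfae : AEMeasurable (fun t => p t / t ^ 2) (volume.restrict (Set.Ioc (0:ℝ) n)) := by
    have h2 : AEMeasurable (fun t => p n₀ * (t / n₀) ^ Γ t / t ^ 2)
        (volume.restrict (Set.Ioc (0:ℝ) n)) := by
      exact ((aemeasurable_const.mul
        (((measurable_id.div_const n₀).aemeasurable).pow hΓae)).div
        ((measurable_id.pow_const 2).aemeasurable))
    apply h2.congr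
    filter_upwards [ae_restrict_mem measurableSet_Ioc] with t ht
    rw [heos t ⟨ht.1, ht.2.trans hnn₀⟩]
  have hfint : IntervalIntegrable (fun t => p t / t ^ 2) volume 0 n := by
    rw [intervalIntegrable_iff_integrableOn_Ioc_of_le hn0.le]
    have hgint' : IntegrableOn g (Set.Ioc 0 n) volume := by
      rw [← intervalIntegrable_iff_integrableOn_Ioc_of_le hn0.le]; exact hgint
    refine Integrable.mono' hgint' hfae.aestronglyMeasurable ?_
    filter_upwards [ae_restrict_mem measurableSet_Ioc] with t ht
    rw [Real.norm_eq_abs, abs_of_nonneg (hbound t ht).1]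
    exact (hbound t ht).2
  -- compare integrals
  have hle : (∫ t in (0:ℝ)..n, p t / t ^ 2) ≤ ∫ t in (0:ℝ)..n, g t := by
    rw [intervalIntegral.integral_of_le hn0.le, intervalIntegral.integral_of_le hn0.le]
    apply setIntegral_mono_on
    · exact (intervalIntegrable_iff_integrableOn_Ioc_of_le hn0.le).1 hfint
    · exact (intervalIntegrable_iff_integrableOn_Ioc_of_le hn0.le).1 hgint
    · exact measurableSet_Ioc
    · exact fun t ht => (hbound t ht).2
  -- compute ∫ g
  have hgval : (∫ t in (0:ℝ)..n, g t) = C * n ^ (γ - 1) / (γ - 1) := by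
    rw [hgdef]
    simp only
    rw [intervalIntegral.integral_const_mul, integral_rpow (Or.inl (by linarith))]
    have h0 : (0:ℝ) ^ (γ - 2 + 1) = 0 := Real.zero_rpow (by linarith)
    rw [h0]
    ring_nf
  have hpn : p n = p n₀ * (n / n₀) ^ γ := heos n ⟨hn0, hnn₀⟩
  have hpn0 : 0 < p n := by rw [hpn]; positivity
  have hkey : n * (C * n ^ (γ - 1) / (γ - 1)) = p n / (γ - 1) := by
    rw [hpn, Real.div_rpow hn0.le hn₀.le, hCdef]
    field_simp
    have hpow : n ^ γ = n ^ (γ - 1) * n := by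
      rw [← Real.rpow_add_one hn0.ne' (γ - 1)]; ring_nf
    rw [hpow]; ring
  have first : (n * ∫ t in (0:ℝ)..n, p t / t ^ 2) ≤ p n / (γ - 1) := by
    calc n * ∫ t in (0:ℝ)..n, p t / t ^ 2 ≤ n * ∫ t in (0:ℝ)..n, g t :=
          mul_le_mul_of_nonneg_left hle hn0.le
      _ = p n / (γ - 1) := by rw [hgval, hkey]
  have second : p n / (γ - 1) ≤ p n / (Γmin - 1) :=
    div_le_div_of_nonneg_left hpn0.le (by linarith) (by linarith)
  exact ⟨first, second, by linarith⟩
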